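/- arXiv:2505.09200 — 5 statements merged into one kernel-verified Lean document; each statement's English description precedes it below -/
import Mathlib

section
/- Let n ≥ 1, let K ⊆ ℝⁿ be a nonempty compact ball-body, and set d = diam(K). Then 2 − d ≤ diam(K^c) ≤ √(4 − d²); in particular 2 ≤ diam(K) + diam(K^c) ≤ 2√2. -/
open Metric Set

noncomputable section

/-- The `c`-dual of a set `A ⊆ ℝⁿ`. -/
def cDual {n : ℕ} (A : Set (EuclideanSpace ℝ (Fin n))) : Set (EuclideanSpace ℝ (Fin n)) :=
  {y | ∀ x ∈ A, ‖x - y‖ ≤ 1}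

lemma mem_cDual {n : ℕ} {A : Set (EuclideanSpace ℝ (Fin n))} {y : EuclideanSpace ℝ (Fin n)} :
    y ∈ cDual A ↔ ∀ x ∈ A, dist x y ≤ 1 := by
  simp [cDual, dist_eq_norm]

lemma cDual_isClosed {n : ℕ} (A : Set (EuclideanSpace ℝ (Fin n))) : IsClosed (cDual A) := by
  have h : cDual A = ⋂ x ∈ A, closedBall x 1 := by
    ext y
    simp [mem_cDual, dist_comm]
  rw [h]
  exact isClosed_biInter fun x _ => isClosed_closedBall

lemma cDual_subset_ball {n : ℕ} {A : Set (EuclideanSpace ℝ (Fin n))} {x : EuclideanSpace ℝ (Fin n)}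
    (hx : x ∈ A) : cDual A ⊆ closedBall x 1 := by
  intro y hy
  rw [mem_closedBall, dist_comm]
  exact mem_cDual.1 hy x hx

/-- key geometric fact : four distances ≤ 1 forces `‖u-v‖² + ‖p-q‖² ≤ 4`. -/
lemma sq_add_sq_le {n : ℕ} {p q u v : EuclideanSpace ℝ (Fin n)}
    (h1 : dist p u ≤ 1) (h2 : dist p v ≤ 1) (h3 : dist q u ≤ 1) (h4 : dist q v ≤ 1) :
    dist u v ^ 2 + dist p q ^ 2 ≤ 4 := by
  simp only [dist_eq_norm] at *
  have pl1 := parallelogram_law_with_norm ℝ (p - u) (p - v)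
  have pl2 := parallelogram_law_with_norm ℝ (q - u) (q - v)
  have e1 : (p - u) - (p - v) = -(u - v) := by abel
  have e2 : (q - u) - (q - v) = -(u - v) := by abel
  rw [e1, norm_neg] at pl1
  rw [e2, norm_neg] at pl2
  have e3 : ((p - u) + (p - v)) - ((q - u) + (q - v)) = (p - q) + (p - q) := by abel
  have h5 : ‖(p - q) + (p - q)‖ ≤ ‖(p - u) + (p - v)‖ + ‖(q - u) + (q - v)‖ := by
    rw [← e3]; exact norm_sub_le _ _
  have h6 : ‖(p - q) + (p - q)‖ = 2 * ‖p - q‖ := by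
    rw [← two_smul ℝ (p - q), norm_smul]; simp
  nlinarith [norm_nonneg ((p - u) + (p - v)), norm_nonneg ((q - u) + (q - v)),
    norm_nonneg (p - u), norm_nonneg (p - v), norm_nonneg (q - u), norm_nonneg (q - v),
    norm_nonneg (u - v), norm_nonneg (p - q),
    sq_nonneg (‖(p - u) + (p - v)‖ - ‖(q - u) + (q - v)‖)]

set_option maxHeartbeats 1000000 in
/-- there is a pair `x₀ ∈ K`, `y₀ ∈ L` at distance exactly 1. -/
lemma exists_dist_one {n : ℕ} (hn : 1 ≤ n) {K L : Set (EuclideanSpace ℝ (Fin n))}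
    (hKne : K.Nonempty) (hLne : L.Nonempty)
    (hK : K = cDual L) (hL : L = cDual K) :
    ∃ x₀ ∈ K, ∃ y₀ ∈ L, dist x₀ y₀ = 1 := by
  obtain ⟨a, ha⟩ := hKne
  obtain ⟨b, hb⟩ := hLne
  -- both are compact
  have hKc : IsCompact K := by
    refine IsCompact.of_isClosed_subset (isCompact_closedBall b 1) ?_ ?_
    · rw [hK]; exact cDual_isClosed L
    · rw [hK]; exact cDual_subset_ball hb
  have hLc : IsCompact L := by
    refine IsCompact.of_isClosed_subset (isCompact_closedBall a 1) ?_ ?_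
    · rw [hL]; exact cDual_isClosed K
    · rw [hL]; exact cDual_subset_ball ha
  -- maximize distance over K × L
  obtain ⟨⟨x₀, y₀⟩, hmem, hmax⟩ := (hKc.prod hLc).exists_isMaxOn
    ((Set.Nonempty.prod ⟨a, ha⟩ ⟨b, hb⟩))
    (continuous_fst.dist continuous_snd).continuousOn
  obtain ⟨hx₀ : x₀ ∈ K, hy₀ : y₀ ∈ L⟩ := hmem
  set m := dist x₀ y₀ with hm
  have hmax' : ∀ x ∈ K, ∀ y ∈ L, dist x y ≤ m := by
    intro x hx y hy
    exact isMaxOn_iff.1 hmax (x, y) (Set.mk_mem_prod hx hy)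
  have hm1 : m ≤ 1 := by
    rw [hm, dist_comm]
    have := hK ▸ hx₀
    exact mem_cDual.1 this y₀ hy₀
  have hm0 : 0 < m := by
    rcases lt_or_ge 0 m with h | h
    · exact h
    · exfalso
      have hzero : ∀ x ∈ K, ∀ y ∈ L, dist x y = 0 := fun x hx y hy =>
        le_antisymm (le_trans (hmax' x hx y hy) h) dist_nonneg
      have hba : b = a := by
        have := hzero a ha b hb
        rw [dist_comm] at this
        exact dist_eq_zero.1 this
      set e : EuclideanSpace ℝ (Fin n) := EuclideanSpace.single (⟨0, hn⟩ : Fin n) (1:ℝ) with he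
      have hnorme : ‖e‖ = 1 := by
        rw [he, EuclideanSpace.norm_single]; norm_num
      have hLa : ∀ y ∈ L, y = a := by
        intro y hy
        have := hzero a ha y hy
        exact (dist_eq_zero.1 this).symm
      have hzK : a + e ∈ K := by
        rw [hK, mem_cDual]
        intro y hy
        rw [hLa y hy, dist_eq_norm]
        have : a - (a + e) = -e := by abel
        rw [this, norm_neg, hnorme]
      have h1 := hzero (a + e) hzK b hb
      rw [hba, dist_eq_norm] at h1
      have : a + e - a = e := by abel
      rw [this, hnorme] at h1
      norm_num at h1
  -- the stretched point q
  set q := x₀ + ((1 - m) / m) • (x₀ - y₀) with hq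
  have hdq : dist x₀ q = 1 - m := by
    rw [dist_eq_norm]
    have : x₀ - q = -(((1 - m) / m) • (x₀ - y₀)) := by rw [hq]; abel
    rw [this, norm_neg, norm_smul, Real.norm_eq_abs, abs_of_nonneg
      (div_nonneg (by linarith) hm0.le)]
    rw [← dist_eq_norm, ← hm]
    field_simp
  have hqK : q ∈ K := by
    rw [hK, mem_cDual]
    intro y hy
    calc dist y q ≤ dist y x₀ + dist x₀ q := dist_triangle _ _ _
      _ ≤ m + (1 - m) := by
          rw [hdq, dist_comm]
          have := hmax' x₀ hx₀ y hy
          linarith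
      _ = 1 := by ring
  have hdqy : dist q y₀ = 1 := by
    rw [dist_eq_norm]
    have : q - y₀ = (1 + (1 - m) / m) • (x₀ - y₀) := by
      rw [hq, add_smul, one_smul]; abel
    rw [this, norm_smul, Real.norm_eq_abs, ← dist_eq_norm, ← hm,
      abs_of_nonneg (by
        have h0 : (0:ℝ) ≤ (1 - m) / m := div_nonneg (by linarith) hm0.le
        linarith)]
    field_simp
    ring
  have : m = 1 := le_antisymm hm1 (hdqy ▸ hmax' q hqK y₀ hy₀)
  exact ⟨x₀, hx₀, y₀, hy₀, this⟩

/-- For a nonempty compact ball-body `K` with `d = diam(K)` one has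
`2 - d ≤ diam(K^c) ≤ √(4 - d²)`; in particular `2 ≤ diam(K) + diam(K^c) ≤ 2√2`. -/
theorem stmt12 (n : ℕ) (hn : 1 ≤ n) (K : Set (EuclideanSpace ℝ (Fin n)))
    (hne : K.Nonempty) (hcomp : IsCompact K) (hbb : K = cDual (cDual K)) :
    (2 - Metric.diam K ≤ Metric.diam (cDual K) ∧
        Metric.diam (cDual K) ≤ Real.sqrt (4 - Metric.diam K ^ 2)) ∧
      2 ≤ Metric.diam K + Metric.diam (cDual K) ∧
        Metric.diam K + Metric.diam (cDual K) ≤ 2 * Real.sqrt 2 := by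
  -- the dual body is nonempty
  have hLne : (cDual K).Nonempty := by
    by_contra h
    rw [Set.not_nonempty_iff_eq_empty] at h
    have hKuniv : K = Set.univ := by
      rw [hbb, h]
      ext y; simp [cDual]
    obtain ⟨C, hC⟩ := Metric.isBounded_iff.1 hcomp.isBounded
    set e : EuclideanSpace ℝ (Fin n) := EuclideanSpace.single (⟨0, hn⟩ : Fin n) (1:ℝ) with he
    have hnorme : ‖e‖ = 1 := by rw [he, EuclideanSpace.norm_single]; norm_num
    have h1 : dist (0 : EuclideanSpace ℝ (Fin n)) ((|C| + 1) • e) ≤ C := by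
      refine hC ?_ ?_ <;> · rw [hKuniv]; trivial
    rw [dist_eq_norm, zero_sub, norm_neg, norm_smul, Real.norm_eq_abs, hnorme, mul_one,
      abs_of_nonneg (by positivity)] at h1
    have := abs_nonneg C
    have := le_abs_self C
    linarith
  obtain ⟨x₀, hx₀, y₀, hy₀, hxy⟩ := exists_dist_one hn hne hLne hbb rfl
  have hKb := hcomp.isBounded
  have hLb : Bornology.IsBounded (cDual K) :=
    Metric.isBounded_closedBall.subset (cDual_subset_ball hx₀)
  set d := Metric.diam K with hd
  set D := Metric.diam (cDual K) with hD
  have hd0 : 0 ≤ d := diam_nonneg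
  have hD0 : 0 ≤ D := diam_nonneg
  have hy₀K : ∀ x ∈ K, dist x y₀ ≤ 1 := fun x hx => mem_cDual.1 hy₀ x hx
  have hd2 : d ≤ 2 := by
    refine diam_le_of_forall_dist_le (by norm_num) fun x hx y hy => ?_
    calc dist x y ≤ dist x y₀ + dist y₀ y := dist_triangle _ _ _
      _ ≤ 1 + 1 := by
          have h1 := hy₀K x hx
          have h2 := hy₀K y hy
          rw [dist_comm] at h2
          linarith
      _ = 2 := by norm_num
  -- lower bound
  have lower : 2 - d ≤ D := by
    rcases le_or_gt d 1 with hd1 | hd1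
    · set y₁ := x₀ + (1 - d) • (x₀ - y₀) with hy₁
      have hy₁L : y₁ ∈ cDual K := by
        rw [mem_cDual]
        intro x hx
        have h1 : dist x x₀ ≤ d := dist_le_diam_of_mem hKb hx hx₀
        have h2 : dist x₀ y₁ = 1 - d := by
          rw [dist_eq_norm]
          have hv : x₀ - y₁ = -((1 - d) • (x₀ - y₀)) := by rw [hy₁]; module
          rw [hv, norm_neg, norm_smul, Real.norm_eq_abs, abs_of_nonneg (by linarith),
            ← dist_eq_norm, hxy, mul_one]
        calc dist x y₁ ≤ dist x x₀ + dist x₀ y₁ := dist_triangle _ _ _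
          _ ≤ d + (1 - d) := by rw [h2]; linarith
          _ = 1 := by ring
      have hdist : dist y₁ y₀ = 2 - d := by
        rw [dist_eq_norm]
        have hv : y₁ - y₀ = (2 - d) • (x₀ - y₀) := by rw [hy₁]; module
        rw [hv, norm_smul, Real.norm_eq_abs, abs_of_nonneg (by linarith),
          ← dist_eq_norm, hxy, mul_one]
      calc 2 - d = dist y₁ y₀ := hdist.symm
        _ ≤ D := dist_le_diam_of_mem hLb hy₁L hy₀
    · rcases le_or_gt D 1 with hD1 | hD1
      · -- symmetric construction
        set x₁ := y₀ + (1 - D) • (y₀ - x₀) with hx₁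
        have hx₁K : x₁ ∈ K := by
          rw [hbb, mem_cDual]
          intro y hy
          have h1 : dist y y₀ ≤ D := dist_le_diam_of_mem hLb hy hy₀
          have h2 : dist y₀ x₁ = 1 - D := by
            rw [dist_eq_norm]
            have hv : y₀ - x₁ = -((1 - D) • (y₀ - x₀)) := by rw [hx₁]; module
            rw [hv, norm_neg, norm_smul, Real.norm_eq_abs, abs_of_nonneg (by linarith),
              ← dist_eq_norm, dist_comm, hxy, mul_one]
          calc dist y x₁ ≤ dist y y₀ + dist y₀ x₁ := dist_triangle _ _ _
            _ ≤ D + (1 - D) := by rw [h2]; linarith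
            _ = 1 := by ring
        have hdist : dist x₁ x₀ = 2 - D := by
          rw [dist_eq_norm]
          have hv : x₁ - x₀ = (2 - D) • (y₀ - x₀) := by rw [hx₁]; module
          rw [hv, norm_smul, Real.norm_eq_abs, abs_of_nonneg (by linarith),
            ← dist_eq_norm, dist_comm, hxy, mul_one]
        have h3 : 2 - D ≤ d := by
          calc 2 - D = dist x₁ x₀ := hdist.symm
            _ ≤ d := dist_le_diam_of_mem hKb hx₁K hx₀
        linarith
      · linarith
  -- upper bound
  have upper : D ≤ Real.sqrt (4 - d ^ 2) := by
    refine diam_le_of_forall_dist_le (Real.sqrt_nonneg _) fun u hu v hv => ?_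
    have hu1 : ∀ x ∈ K, dist x u ≤ 1 := fun x hx => mem_cDual.1 hu x hx
    have hv1 : ∀ x ∈ K, dist x v ≤ 1 := fun x hx => mem_cDual.1 hv x hx
    have hw4 : dist u v ^ 2 ≤ 4 := by
      obtain ⟨p, hp⟩ := hne
      have := sq_add_sq_le (hu1 p hp) (hv1 p hp) (hu1 p hp) (hv1 p hp)
      nlinarith [sq_nonneg (dist p p)]
    have key : ∀ p ∈ K, ∀ q ∈ K, dist p q ≤ Real.sqrt (4 - dist u v ^ 2) := by
      intro p hp q hq
      have h := sq_add_sq_le (hu1 p hp) (hv1 p hp) (hu1 q hq) (hv1 q hq)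
      rw [Real.le_sqrt dist_nonneg (by linarith)]
      linarith
    have hdle : d ≤ Real.sqrt (4 - dist u v ^ 2) :=
      diam_le_of_forall_dist_le (Real.sqrt_nonneg _) key
    have hsq : Real.sqrt (4 - dist u v ^ 2) ^ 2 = 4 - dist u v ^ 2 :=
      Real.sq_sqrt (by linarith)
    rw [Real.le_sqrt dist_nonneg (by nlinarith [Real.sqrt_nonneg (4 - dist u v ^ 2)])]
    nlinarith [Real.sqrt_nonneg (4 - dist u v ^ 2)]
  refine ⟨⟨lower, upper⟩, by linarith, ?_⟩
  have hs4 : (0:ℝ) ≤ 4 - d ^ 2 := by nlinarith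
  set t := Real.sqrt (4 - d ^ 2) with ht
  have ht0 : 0 ≤ t := Real.sqrt_nonneg _
  have hts : t ^ 2 = 4 - d ^ 2 := Real.sq_sqrt hs4
  have h8 : d + D ≤ Real.sqrt 8 := by
    rw [Real.le_sqrt (by linarith) (by norm_num)]
    nlinarith [sq_nonneg (d - t)]
  have h82 : Real.sqrt 8 = 2 * Real.sqrt 2 := by
    rw [show (8:ℝ) = 2 ^ 2 * 2 by norm_num, Real.sqrt_mul (by positivity),
      Real.sqrt_sq (by norm_num)]
  rw [h82] at h8
  exact h8
end
end

section
/- Let n ≥ 1, let K ⊆ ℝⁿ be a nonempty compact ball-body, let r ∈ [0,1] and x ∈ ℝⁿ be such that B(x,r) ⊆ K and r is the in-radius of K (i.e. every closed ball B(x',r') contained in K has r' ≤ r). Then K ⊆ B(x, √(2r − r²)); in particular the out-radius of K is at most √(2r − r²). -/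
open Metric Set

noncomputable section

set_option maxHeartbeats 1000000 in
/-- If `B(x,r) ⊆ K` attains the in-radius of a nonempty compact ball-body `K` (with
`r ∈ [0,1]`), then `K ⊆ B(x, √(2r - r²))`. -/
theorem stmt13 (n : ℕ) (hn : 1 ≤ n) (K : Set (EuclideanSpace ℝ (Fin n)))
    (hne : K.Nonempty) (hcomp : IsCompact K) (hbb : K = cDual (cDual K))
    (x : EuclideanSpace ℝ (Fin n)) (r : ℝ) (hr : r ∈ Set.Icc (0 : ℝ) 1)
    (hin : closedBall x r ⊆ K)
    (hmax : ∀ (x' : EuclideanSpace ℝ (Fin n)) (r' : ℝ), 0 ≤ r' →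
      closedBall x' r' ⊆ K → r' ≤ r) :
    K ⊆ closedBall x (Real.sqrt (2 * r - r ^ 2)) := by
  obtain ⟨hr0, hr1⟩ := hr
  intro z hz
  by_contra hfar
  simp only [mem_closedBall, not_le] at hfar
  set ρ : ℝ := Real.sqrt (2 * r - r ^ 2) with hρdef
  have hρ0 : 0 ≤ ρ := Real.sqrt_nonneg _
  have hρsq : ρ ^ 2 = 2 * r - r ^ 2 := Real.sq_sqrt (by nlinarith)
  set d : ℝ := dist z x with hddef
  have hd : d = ‖z - x‖ := by rw [hddef, dist_eq_norm]
  have hdρ : ρ < d := hfar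
  have hd0 : 0 < d := lt_of_le_of_lt hρ0 hdρ
  -- cDual K is nonempty, else K = univ, contradicting compactness
  have hCne : (cDual K).Nonempty := by
    by_contra hC
    rw [not_nonempty_iff_eq_empty] at hC
    have hKuniv : K = univ := by
      rw [hbb, hC]; ext y; simp [cDual]
    have hNT : Nontrivial (EuclideanSpace ℝ (Fin n)) := by
      have : Nonempty (Fin n) := ⟨⟨0, hn⟩⟩
      infer_instance
    obtain ⟨R, hR⟩ := hcomp.isBounded.subset_closedBall 0
    obtain ⟨p, hp⟩ := NormedSpace.exists_lt_norm ℝ (EuclideanSpace ℝ (Fin n)) R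
    have : p ∈ K := hKuniv ▸ mem_univ p
    have := hR this
    simp only [mem_closedBall, dist_zero_right] at this
    linarith
  -- every y in cDual K is within 1 - r of x
  have hC1 : ∀ y ∈ cDual K, ‖y - x‖ ≤ 1 - r := by
    intro y hy
    rcases eq_or_ne y x with h | h
    · simp [h]; linarith
    · set s : ℝ := ‖y - x‖ with hs
      have hs0 : 0 < s := by
        rw [hs, norm_pos_iff]; exact sub_ne_zero_of_ne h
      have hp : x + (r / s) • (x - y) ∈ closedBall x r := by
        simp only [mem_closedBall, dist_eq_norm]
        have : x + (r / s) • (x - y) - x = (r / s) • (x - y) := by abel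
        rw [this, norm_smul, Real.norm_eq_abs, abs_of_nonneg (by positivity)]
        rw [show ‖x - y‖ = s by rw [hs, norm_sub_rev]]
        rw [div_mul_cancel₀ _ (ne_of_gt hs0)]
      have hle := hy _ (hin hp)
      have : x + (r / s) • (x - y) - y = (1 + r / s) • (x - y) := by
        rw [add_smul, one_smul]; abel
      rw [this, norm_smul, Real.norm_eq_abs,
        show ‖x - y‖ = s by rw [norm_sub_rev],
        abs_of_nonneg (by positivity)] at hle
      have : (1 + r / s) * s = s + r := by field_simp
      rw [this] at hle
      linarith
  -- set up the perturbed ball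
  set δ : ℝ := d ^ 2 - ρ ^ 2 with hδdef
  have hδ0 : 0 < δ := by nlinarith
  set c : ℝ := δ / (2 * d ^ 2) with hcdef
  have hc0 : 0 < c := by positivity
  have hc1 : c ≤ 1 / 2 := by
    rw [hcdef, div_le_div_iff₀ (by positivity) (by norm_num)]
    nlinarith
  set x' : EuclideanSpace ℝ (Fin n) := x + c • (z - x) with hx'def
  set E : ℝ := (1 - r) ^ 2 - c ^ 2 * d ^ 2 with hEdef
  -- key estimate: every y in cDual K satisfies ‖y - x'‖² ≤ E
  have hkey : ∀ y ∈ cDual K, ‖y - x'‖ ^ 2 ≤ E := by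
    intro y hy
    have h1 : ‖y - x‖ ≤ 1 - r := hC1 y hy
    have h2 : ‖z - y‖ ≤ 1 := hy z hz
    set v : EuclideanSpace ℝ (Fin n) := y - x with hv
    set w : EuclideanSpace ℝ (Fin n) := z - x with hw
    have hwnorm : ‖w‖ = d := hd.symm
    have hexp : ‖y - x'‖ ^ 2 = ‖v‖ ^ 2 - 2 * (c * inner ℝ v w) + c ^ 2 * ‖w‖ ^ 2 := by
      have : y - x' = v - c • w := by rw [hx'def, hv, hw]; abel
      rw [this, @norm_sub_sq_real, real_inner_smul_right, norm_smul, mul_pow,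
        Real.norm_eq_abs, sq_abs]
    have hcons : ‖v‖ ^ 2 - 2 * (inner ℝ v w : ℝ) + d ^ 2 ≤ 1 := by
      have : z - y = w - v := by rw [hv, hw]; abel
      have h3 : ‖w - v‖ ^ 2 ≤ 1 := by
        rw [← this]; nlinarith [norm_nonneg (z - y)]
      rw [@norm_sub_sq_real, real_inner_comm] at h3
      rw [← hwnorm]; linarith
    have hvnn : 0 ≤ ‖v‖ := norm_nonneg v
    have hv1 : ‖v‖ ^ 2 ≤ (1 - r) ^ 2 := by nlinarith
    rw [hexp, hwnorm, hEdef]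
    have h2c : c * (2 * d ^ 2) = δ := by
      rw [hcdef]; field_simp
    have hA := mul_le_mul_of_nonneg_left hcons hc0.le
    have h1c : (0:ℝ) ≤ 1 - c := by linarith
    have hB := mul_le_mul_of_nonneg_right hv1 h1c
    have hCC : c * (c * (2 * d ^ 2)) = c * (d ^ 2 - ρ ^ 2) := by rw [h2c, hδdef]
    have hD : c * ρ ^ 2 = c * (2 * r - r ^ 2) := by rw [hρsq]
    linarith [hA, hB, hCC, hD]
  -- E ≥ 0 since cDual K is nonempty
  obtain ⟨y₀, hy₀⟩ := hCne
  have hE0 : 0 ≤ E := le_trans (sq_nonneg ‖y₀ - x'‖) (hkey y₀ hy₀)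
  have hElt : E < (1 - r) ^ 2 := by
    rw [hEdef]
    have : 0 < c ^ 2 * d ^ 2 := by positivity
    linarith
  set r' : ℝ := 1 - Real.sqrt E with hr'def
  have hsqrtE : Real.sqrt E < 1 - r := by
    calc Real.sqrt E < Real.sqrt ((1 - r) ^ 2) := Real.sqrt_lt_sqrt hE0 hElt
    _ = 1 - r := by rw [Real.sqrt_sq (by linarith)]
  have hr'r : r < r' := by rw [hr'def]; linarith
  have hsub : closedBall x' r' ⊆ K := by
    intro p hp
    rw [hbb]
    intro y hy
    have h1 : ‖y - x'‖ ≤ Real.sqrt E :=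
      (Real.le_sqrt (norm_nonneg _) hE0).2 (hkey y hy)
    have h2 : ‖x' - p‖ ≤ r' := by
      rw [← dist_eq_norm, dist_comm]; exact hp
    calc ‖y - p‖ ≤ ‖y - x'‖ + ‖x' - p‖ := norm_sub_le_norm_sub_add_norm_sub y x' p
    _ ≤ Real.sqrt E + r' := add_le_add h1 h2
    _ = 1 := by rw [hr'def]; ring
  have := hmax x' r' (by linarith) hsub
  linarith
end
end

section
/- Let n ≥ 2, let K ⊆ ℝⁿ be a nonempty compact ball-body, and let 0 < R < 1 be such that K ⊆ B(0,R) and K^c ⊆ B(0,R). Then B(0, √(5/4 − R²) − 1/2) ⊆ K^c ∪ (−K), where −K = {−x : x ∈ K}. -/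
open Metric Set Pointwise

noncomputable section

/-- Pure real-arithmetic core of the Schramm-type estimate. -/
lemma stmt14_aux {R r nx nz ny nzx nxy nzy ixy izy : ℝ}
    (h1 : nxy ^ 2 = nx ^ 2 - 2 * ixy + ny ^ 2)
    (h2 : nzy ^ 2 = nz ^ 2 + 2 * izy + ny ^ 2)
    (h3 : izy - ixy ≤ nzx * ny)
    (hzx : nzx ≤ 1) (hxR : nx ≤ R) (hzR : nz ≤ R) (hy : ny ≤ r)
    (hxy : 1 < nxy) (hkey : r ^ 2 + r = 1 - R ^ 2)
    (hyn : 0 ≤ ny) (hzyn : 0 ≤ nzy) (hxn : 0 ≤ nx) (hzn : 0 ≤ nz) :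
    nzy ≤ 1 := by
  have hrpos : 0 ≤ r := le_trans hyn hy
  have h5 : nzx * ny ≤ 1 * r := by
    apply mul_le_mul hzx hy hyn zero_le_one
  have h6 : 1 < nxy ^ 2 := by nlinarith
  have h7 : nz ^ 2 ≤ R ^ 2 := by nlinarith
  have h8 : nx ^ 2 ≤ R ^ 2 := by nlinarith
  have h9 : ny ^ 2 ≤ r ^ 2 := by nlinarith
  have hsqle : nzy ^ 2 ≤ 1 := by linarith
  nlinarith

/-- Schramm-type theorem: if `K` is a nonempty compact ball-body with
`K, K^c ⊆ B(0,R)` for some `0 < R < 1`, then `B(0, √(5/4 - R²) - 1/2) ⊆ K^c ∪ (-K)`. -/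
theorem stmt14 (n : ℕ) (hn : 2 ≤ n) (K : Set (EuclideanSpace ℝ (Fin n)))
    (hne : K.Nonempty) (hcomp : IsCompact K) (hbb : K = cDual (cDual K))
    (R : ℝ) (hR : R ∈ Set.Ioo (0 : ℝ) 1)
    (hK : K ⊆ closedBall (0 : EuclideanSpace ℝ (Fin n)) R)
    (hKc : cDual K ⊆ closedBall (0 : EuclideanSpace ℝ (Fin n)) R) :
    closedBall (0 : EuclideanSpace ℝ (Fin n)) (Real.sqrt (5 / 4 - R ^ 2) - 1 / 2) ⊆
      cDual K ∪ (-K) := by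
  obtain ⟨hR0, hR1⟩ := hR
  have hsq : Real.sqrt (5 / 4 - R ^ 2) ^ 2 = 5 / 4 - R ^ 2 :=
    Real.sq_sqrt (by nlinarith)
  have hkey : (Real.sqrt (5 / 4 - R ^ 2) - 1 / 2) ^ 2 + (Real.sqrt (5 / 4 - R ^ 2) - 1 / 2)
      = 1 - R ^ 2 := by nlinarith
  intro y hy
  have hy' : ‖y‖ ≤ Real.sqrt (5 / 4 - R ^ 2) - 1 / 2 := by
    simpa using mem_closedBall_zero_iff.mp hy
  by_cases hyc : y ∈ cDual K
  · exact Or.inl hyc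
  · right
    rw [Set.mem_neg, hbb]
    simp only [cDual, Set.mem_setOf_eq] at hyc ⊢
    push_neg at hyc
    obtain ⟨x, hxK, hxy⟩ := hyc
    intro z hz
    have hzx : ‖z - x‖ ≤ 1 := by rw [norm_sub_rev]; exact hz x hxK
    have hxR : ‖x‖ ≤ R := by simpa using mem_closedBall_zero_iff.mp (hK hxK)
    have hzR : ‖z‖ ≤ R := by simpa using mem_closedBall_zero_iff.mp (hKc hz)
    have h1 : ‖x - y‖ ^ 2 = ‖x‖ ^ 2 - 2 * inner ℝ x y + ‖y‖ ^ 2 := by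
      rw [@norm_sub_sq_real]
    have hzy : z - -y = z + y := by abel
    rw [hzy]
    have h2 : ‖z + y‖ ^ 2 = ‖z‖ ^ 2 + 2 * inner ℝ z y + ‖y‖ ^ 2 := by
      rw [@norm_add_sq_real]
    have h3 : (inner ℝ z y : ℝ) - inner ℝ x y ≤ ‖z - x‖ * ‖y‖ := by
      have := real_inner_le_norm (z - x) y
      rwa [inner_sub_left] at this
    exact stmt14_aux h1 h2 h3 hzx hxR hzR hy' hxy hkey (norm_nonneg y)
      (norm_nonneg (z + y)) (norm_nonneg x) (norm_nonneg z)
end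
end

section
/- Let n ≥ 2 and let K ⊆ ℝⁿ be a nonempty compact ball-body. Then K has no c-extremal points if and only if K = B(x,1) for some x ∈ ℝⁿ, i.e. the closed unit balls are the only nonempty compact ball-bodies without c-extremal points. -/
open Metric Set

noncomputable section

/-- The `c`-hull of a set: `conv_c(A) = (A^c)^c`. -/
def cHull {n : ℕ} (A : Set (EuclideanSpace ℝ (Fin n))) : Set (EuclideanSpace ℝ (Fin n)) :=
  cDual (cDual A)

/-- A point `x ∈ K` is `c`-extremal for `K` if `x ∈ conv_c({y,z})` with `y, z ∈ K` forces
`x = y` or `x = z`. -/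
def IsCExtremal {n : ℕ} (K : Set (EuclideanSpace ℝ (Fin n)))
    (x : EuclideanSpace ℝ (Fin n)) : Prop :=
  x ∈ K ∧ ∀ y ∈ K, ∀ z ∈ K, x ∈ cHull {y, z} → x = y ∨ x = z

private lemma eq_one_of_sq {a : ℝ} (h0 : 0 ≤ a) (h : a ^ 2 = 1) : a = 1 := by
  have h2 := Real.sqrt_sq h0
  rw [h, Real.sqrt_one] at h2
  exact h2.symm

/-- Key membership lemma: if `y, z` are on the unit sphere around `c`, `x = y + z - c` and
`‖x - c‖ ≤ 1`, then `x ∈ cHull {y, z}`. -/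
private lemma memhull {n : ℕ} (c x y z : EuclideanSpace ℝ (Fin n))
    (hy : ‖y - c‖ = 1) (hz : ‖z - c‖ = 1) (hx : ‖x - c‖ ≤ 1)
    (hsum : x = y + z - c) : x ∈ cHull ({y, z} : Set (EuclideanSpace ℝ (Fin n))) := by
  intro w hw
  have hwy : ‖y - w‖ ≤ 1 := hw y (by simp)
  have hwz : ‖z - w‖ ≤ 1 := hw z (by simp)
  have e1 : ‖y - w‖ ^ 2 = ‖y - c‖ ^ 2 - 2 * inner ℝ (y - c) (w - c) + ‖w - c‖ ^ 2 := by
    rw [show y - w = (y - c) - (w - c) by abel, norm_sub_sq_real]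
  have e2 : ‖z - w‖ ^ 2 = ‖z - c‖ ^ 2 - 2 * inner ℝ (z - c) (w - c) + ‖w - c‖ ^ 2 := by
    rw [show z - w = (z - c) - (w - c) by abel, norm_sub_sq_real]
  have e3 : ‖w - x‖ ^ 2 = ‖w - c‖ ^ 2
      - 2 * ((inner ℝ (y - c) (w - c) : ℝ) + (inner ℝ (z - c) (w - c) : ℝ)) + ‖x - c‖ ^ 2 := by
    rw [show w - x = (w - c) - (x - c) by abel, norm_sub_sq_real,
      show x - c = (y - c) + (z - c) by rw [hsum]; abel]
    rw [inner_add_right, real_inner_comm (w - c) (y - c), real_inner_comm (w - c) (z - c)]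
  rw [hy] at e1
  rw [hz] at e2
  have s1 : ‖y - w‖ ^ 2 ≤ 1 := by nlinarith [norm_nonneg (y - w)]
  have s2 : ‖z - w‖ ^ 2 ≤ 1 := by nlinarith [norm_nonneg (z - w)]
  have i1 : ‖w - c‖ ^ 2 ≤ 2 * inner ℝ (y - c) (w - c) := by nlinarith
  have i2 : ‖w - c‖ ^ 2 ≤ 2 * inner ℝ (z - c) (w - c) := by nlinarith
  have hx2 : ‖x - c‖ ^ 2 ≤ 1 := by nlinarith [norm_nonneg (x - c)]
  have s3 : ‖w - x‖ ^ 2 ≤ 1 := by nlinarith [sq_nonneg (‖w - c‖)]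
  nlinarith [norm_nonneg (w - x), sq_nonneg (‖w - x‖ - 1)]

/-- Strictness lemma for the forward direction. -/
private lemma strict_lemma {n : ℕ} (m x₀ p : EuclideanSpace ℝ (Fin n)) (R : ℝ)
    (hR0 : 0 < R) (hR1 : R < 1) (hx₀ : ‖x₀ - m‖ = R) (hp : ‖p - m‖ ≤ R)
    (hpne : p ≠ x₀) : ‖p - (m - ((1 - R) / R) • (x₀ - m))‖ < 1 := by
  set t : ℝ := (1 - R) / R with ht
  have ht0 : 0 < t := div_pos (by linarith) hR0
  have hexp : p - (m - t • (x₀ - m)) = (p - m) + t • (x₀ - m) := by abel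
  have hv : ‖t • (x₀ - m)‖ = t * R := by
    rw [norm_smul, hx₀, Real.norm_eq_abs, abs_of_pos ht0]
  have e1 : ‖(p - m) + t • (x₀ - m)‖ ^ 2
      = ‖p - m‖ ^ 2 + 2 * (t * inner ℝ (p - m) (x₀ - m)) + (t * R) ^ 2 := by
    rw [norm_add_sq_real, real_inner_smul_right, hv]
  have hCS : (inner ℝ (p - m) (x₀ - m) : ℝ) ≤ ‖p - m‖ * R := by
    have := real_inner_le_norm (p - m) (x₀ - m)
    rwa [hx₀] at this
  have hCS2 : (inner ℝ (p - m) (x₀ - m) : ℝ) ≤ R * R :=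
    le_trans hCS (mul_le_mul_of_nonneg_right hp hR0.le)
  have hlt : (inner ℝ (p - m) (x₀ - m) : ℝ) < R * R := by
    rcases lt_or_eq_of_le hCS2 with h | h
    · exact h
    · exfalso
      have h1 : R ≤ ‖p - m‖ := by nlinarith
      have hpm : ‖p - m‖ = R := le_antisymm hp h1
      have e0 : ‖p - x₀‖ ^ 2 = 0 := by
        rw [show p - x₀ = (p - m) - (x₀ - m) by abel, norm_sub_sq_real, hpm, hx₀, h]; ring
      have hz : ‖p - x₀‖ = 0 := by
        have := sq_nonneg (‖p - x₀‖)
        nlinarith [norm_nonneg (p - x₀)]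
      exact hpne (sub_eq_zero.mp (norm_eq_zero.mp hz))
  have key : R * (1 + t) = 1 := by
    rw [ht]; field_simp; ring
  have hkey2 : (R * (1 + t)) ^ 2 = 1 := by rw [key]; norm_num
  have hfin : ‖(p - m) + t • (x₀ - m)‖ ^ 2 < 1 := by
    rw [e1]
    nlinarith [norm_nonneg (p - m), sq_nonneg (‖p - m‖ - R), mul_pos ht0 ht0]
  rw [hexp]
  nlinarith [norm_nonneg ((p - m) + t • (x₀ - m)),
    sq_nonneg (‖(p - m) + t • (x₀ - m)‖ - 1)]

/-- Existence of a unit vector orthogonal to a given vector, `n ≥ 2`. -/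
private lemma exists_unit_orthogonal {n : ℕ} (hn : 2 ≤ n) (e : EuclideanSpace ℝ (Fin n)) :
    ∃ v : EuclideanSpace ℝ (Fin n), ‖v‖ = 1 ∧ (inner ℝ e v : ℝ) = 0 := by
  have hfr : 0 < Module.finrank ℝ ↥((Submodule.span ℝ {e})ᗮ) := by
    have h1 := Submodule.finrank_add_finrank_orthogonal (K := Submodule.span ℝ ({e} : Set _))
    have h2 : Module.finrank ℝ (EuclideanSpace ℝ (Fin n)) = n := finrank_euclideanSpace_fin
    have h3 : Module.finrank ℝ ↥(Submodule.span ℝ ({e} : Set _)) ≤ 1 := by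
      rcases eq_or_ne e 0 with rfl | he
      · rw [Submodule.span_zero_singleton]
        simp
      · rw [finrank_span_singleton he]
    omega
  have hnt : Nontrivial ↥((Submodule.span ℝ ({e} : Set _))ᗮ) := Module.finrank_pos_iff.mp hfr
  obtain ⟨w, hw⟩ := exists_ne (0 : ↥((Submodule.span ℝ ({e} : Set _))ᗮ))
  have hwE : (w : EuclideanSpace ℝ (Fin n)) ≠ 0 := by
    simpa using hw
  have hwnorm : ‖(w : EuclideanSpace ℝ (Fin n))‖ ≠ 0 := norm_ne_zero_iff.mpr hwE
  refine ⟨‖(w : EuclideanSpace ℝ (Fin n))‖⁻¹ • (w : EuclideanSpace ℝ (Fin n)), ?_, ?_⟩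
  · rw [norm_smul, norm_inv, norm_norm]
    field_simp
  · rw [real_inner_smul_right]
    have hiz : (inner ℝ e (w : EuclideanSpace ℝ (Fin n)) : ℝ) = 0 := by
      have hmem := w.2
      rw [Submodule.mem_orthogonal] at hmem
      exact hmem e (Submodule.mem_span_singleton_self e)
    rw [hiz, mul_zero]

set_option maxHeartbeats 1000000 in
/-- The unit balls are the only nonempty compact ball-bodies with no `c`-extremal points. -/
theorem stmt15 (n : ℕ) (hn : 2 ≤ n) (K : Set (EuclideanSpace ℝ (Fin n)))
    (hne : K.Nonempty) (hcomp : IsCompact K) (hbb : K = cDual (cDual K)) :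
    (¬ ∃ x : EuclideanSpace ℝ (Fin n), IsCExtremal K x) ↔
      ∃ c : EuclideanSpace ℝ (Fin n), K = closedBall c 1 := by
  constructor
  · intro hno
    obtain ⟨k₀, hk₀⟩ := hne
    have htwo : ∃ k₁ ∈ K, k₁ ≠ k₀ := by
      by_contra h
      push_neg at h
      exact hno ⟨k₀, hk₀, fun y hy z hz _ => Or.inl (h y hy).symm⟩
    have hAne : (cDual K).Nonempty := by
      rcases Set.eq_empty_or_nonempty (cDual K) with hA | hA
      · exfalso
        have hKuniv : K = univ := by
          rw [hbb, hA]
          ext y; simp [cDual]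
        obtain ⟨r, hr⟩ := hcomp.isBounded.subset_closedBall 0
        set p : EuclideanSpace ℝ (Fin n) :=
          (|r| + 1) • EuclideanSpace.single (⟨0, by omega⟩ : Fin n) (1 : ℝ) with hp
        have hpmem : p ∈ closedBall (0 : EuclideanSpace ℝ (Fin n)) r := by
          apply hr; rw [hKuniv]; trivial
        rw [mem_closedBall_zero_iff] at hpmem
        have hpn : ‖p‖ = |r| + 1 := by
          rw [hp, norm_smul, EuclideanSpace.norm_single, Real.norm_eq_abs, Real.norm_eq_abs,
            abs_of_nonneg (by positivity : (0:ℝ) ≤ |r| + 1), abs_one, mul_one]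
        rw [hpn] at hpmem
        have := abs_nonneg r
        have := le_abs_self r
        linarith
      · exact hA
    obtain ⟨a₀, ha₀⟩ := hAne
    by_cases hsing : ∀ a ∈ cDual K, a = a₀
    · refine ⟨a₀, ?_⟩
      rw [hbb]
      ext p
      simp only [cDual, mem_setOf_eq, mem_closedBall, dist_eq_norm]
      constructor
      · intro h
        have := h a₀ ha₀
        rwa [norm_sub_rev] at this
      · intro h q hq
        rw [hsing q hq, norm_sub_rev]
        exact h
    · exfalso
      push_neg at hsing
      obtain ⟨a₁, ha₁, hne01⟩ := hsing
      set m : EuclideanSpace ℝ (Fin n) := (1/2 : ℝ) • (a₀ + a₁) with hm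
      have hd0 : 0 < ‖a₀ - a₁‖ := by
        rw [norm_pos_iff]
        exact sub_ne_zero.mpr (Ne.symm hne01)
      have e3' : ‖m - a₀‖ ^ 2 = ‖a₀ - a₁‖ ^ 2 / 4 := by
        have hma : m - a₀ = (1/2 : ℝ) • (a₁ - a₀) := by rw [hm]; module
        rw [hma, norm_smul, Real.norm_eq_abs, norm_sub_rev a₁ a₀]
        rw [abs_of_pos (by norm_num : (0:ℝ) < 1/2)]
        ring
      have hKm : ∀ p ∈ K, ‖p - m‖ ^ 2 ≤ 1 - ‖a₀ - a₁‖ ^ 2 / 4 := by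
        intro p hp
        have h0 : ‖p - a₀‖ ≤ 1 := ha₀ p hp
        have h1 : ‖p - a₁‖ ≤ 1 := ha₁ p hp
        have hpar := parallelogram_law_with_norm ℝ (p - m) (m - a₀)
        have e1 : (p - m) + (m - a₀) = p - a₀ := by abel
        have e2 : (p - m) - (m - a₀) = p - a₁ := by rw [hm]; module
        rw [e1, e2] at hpar
        nlinarith [norm_nonneg (p - a₀), norm_nonneg (p - a₁), norm_nonneg (p - m),
          norm_nonneg (m - a₀)]
      obtain ⟨x₀, hx₀K, hmax⟩ := hcomp.exists_isMaxOn ⟨k₀, hk₀⟩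
        ((continuous_id.sub continuous_const).norm.continuousOn :
          ContinuousOn (fun p : EuclideanSpace ℝ (Fin n) => ‖p - m‖) K)
      have hmax' : ∀ p ∈ K, ‖p - m‖ ≤ ‖x₀ - m‖ := fun p hp => isMaxOn_iff.mp hmax p hp
      set R : ℝ := ‖x₀ - m‖ with hR
      have hR1 : R < 1 := by nlinarith [hKm x₀ hx₀K, norm_nonneg (x₀ - m), hd0]
      have hR0 : 0 < R := by
        obtain ⟨k₁, hk₁, hk₁0⟩ := htwo
        by_contra h
        push_neg at h
        have h1 : k₁ = m := by
          have : ‖k₁ - m‖ = 0 := le_antisymm (le_trans (hmax' k₁ hk₁) h) (norm_nonneg _)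
          exact sub_eq_zero.mp (norm_eq_zero.mp this)
        have h2 : k₀ = m := by
          have : ‖k₀ - m‖ = 0 := le_antisymm (le_trans (hmax' k₀ hk₀) h) (norm_nonneg _)
          exact sub_eq_zero.mp (norm_eq_zero.mp this)
        exact hk₁0 (h1.trans h2.symm)
      set a' : EuclideanSpace ℝ (Fin n) := m - ((1 - R) / R) • (x₀ - m) with ha'
      have hnx : ¬ IsCExtremal K x₀ := fun hx => hno ⟨x₀, hx⟩
      rw [IsCExtremal] at hnx
      push_neg at hnx
      obtain ⟨y, hyK, z, hzK, hmem, hxy, hxz⟩ := hnx hx₀K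
      have hy' : ‖y - a'‖ < 1 :=
        strict_lemma m x₀ y R hR0 hR1 hR.symm (hmax' y hyK) (Ne.symm hxy)
      have hz' : ‖z - a'‖ < 1 :=
        strict_lemma m x₀ z R hR0 hR1 hR.symm (hmax' z hzK) (Ne.symm hxz)
      set ε : ℝ := min (1 - ‖y - a'‖) (1 - ‖z - a'‖) with hε'
      have hε : 0 < ε := lt_min (by linarith) (by linarith)
      set w : EuclideanSpace ℝ (Fin n) := a' - (ε / R) • (x₀ - m) with hw
      have hns : ‖(ε / R) • (x₀ - m)‖ = ε := by
        rw [norm_smul, Real.norm_eq_abs, abs_of_pos (div_pos hε hR0), ← hR]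
        field_simp
      have hwy : ‖y - w‖ ≤ 1 := by
        have hsplit : y - w = (y - a') + (ε / R) • (x₀ - m) := by rw [hw]; abel
        rw [hsplit]
        have := min_le_left (1 - ‖y - a'‖) (1 - ‖z - a'‖)
        calc ‖(y - a') + (ε / R) • (x₀ - m)‖ ≤ ‖y - a'‖ + ‖(ε / R) • (x₀ - m)‖ :=
              norm_add_le _ _
          _ = ‖y - a'‖ + ε := by rw [hns]
          _ ≤ 1 := by rw [hε']; linarith [min_le_left (1 - ‖y - a'‖) (1 - ‖z - a'‖)]
      have hwz : ‖z - w‖ ≤ 1 := by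
        have hsplit : z - w = (z - a') + (ε / R) • (x₀ - m) := by rw [hw]; abel
        rw [hsplit]
        calc ‖(z - a') + (ε / R) • (x₀ - m)‖ ≤ ‖z - a'‖ + ‖(ε / R) • (x₀ - m)‖ :=
              norm_add_le _ _
          _ = ‖z - a'‖ + ε := by rw [hns]
          _ ≤ 1 := by rw [hε']; linarith [min_le_right (1 - ‖y - a'‖) (1 - ‖z - a'‖)]
      have hwmem : w ∈ cDual ({y, z} : Set (EuclideanSpace ℝ (Fin n))) := by
        intro q hq
        simp only [Set.mem_insert_iff, Set.mem_singleton_iff] at hq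
        rcases hq with rfl | rfl
        · exact hwy
        · exact hwz
      have happ : ‖w - x₀‖ ≤ 1 := hmem w hwmem
      have hc : x₀ - w = (1 + (1 - R) / R + ε / R) • (x₀ - m) := by
        rw [hw, ha']; module
      have hcpos : 0 < 1 + (1 - R) / R + ε / R := by
        have hh1 : 0 < (1 - R) / R := div_pos (by linarith) hR0
        have hh2 : 0 < ε / R := div_pos hε hR0
        linarith
      have hnw : ‖x₀ - w‖ = 1 + ε := by
        rw [hc, norm_smul, Real.norm_eq_abs, abs_of_pos hcpos, ← hR]
        field_simp; ring
      rw [norm_sub_rev, hnw] at happ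
      linarith
  · rintro ⟨c, rfl⟩
    rintro ⟨x, hxK, hext⟩
    have hxc : ‖x - c‖ ≤ 1 := by rwa [mem_closedBall, dist_eq_norm] at hxK
    obtain ⟨v, hv1, hv2⟩ := exists_unit_orthogonal hn (x - c)
    have hsle : ‖x - c‖ ^ 2 ≤ 1 := by nlinarith [norm_nonneg (x - c)]
    set β : ℝ := Real.sqrt (1 - ‖x - c‖ ^ 2 / 4) with hβ
    have hβpos : 0 < β := Real.sqrt_pos.mpr (by nlinarith)
    have hβsq : β ^ 2 = 1 - ‖x - c‖ ^ 2 / 4 := Real.sq_sqrt (by nlinarith)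
    set y : EuclideanSpace ℝ (Fin n) := c + (1/2 : ℝ) • (x - c) + β • v with hy
    set z : EuclideanSpace ℝ (Fin n) := c + (1/2 : ℝ) • (x - c) - β • v with hz
    have hyc : ‖y - c‖ = 1 := by
      apply eq_one_of_sq (norm_nonneg _)
      have e : y - c = (1/2 : ℝ) • (x - c) + β • v := by rw [hy]; abel
      rw [e, norm_add_sq_real, real_inner_smul_left, real_inner_smul_right, hv2,
        norm_smul, norm_smul, hv1, Real.norm_eq_abs, Real.norm_eq_abs,
        abs_of_pos hβpos, abs_of_pos (by norm_num : (0:ℝ) < 1/2)]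
      nlinarith
    have hzc : ‖z - c‖ = 1 := by
      apply eq_one_of_sq (norm_nonneg _)
      have e : z - c = (1/2 : ℝ) • (x - c) - β • v := by rw [hz]; abel
      rw [e, norm_sub_sq_real, real_inner_smul_left, real_inner_smul_right, hv2,
        norm_smul, norm_smul, hv1, Real.norm_eq_abs, Real.norm_eq_abs,
        abs_of_pos hβpos, abs_of_pos (by norm_num : (0:ℝ) < 1/2)]
      nlinarith
    have hyK : y ∈ closedBall c 1 := by
      rw [mem_closedBall, dist_eq_norm, hyc]
    have hzK : z ∈ closedBall c 1 := by
      rw [mem_closedBall, dist_eq_norm, hzc]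
    have hsum : x = y + z - c := by rw [hy, hz]; module
    have hxy : x ≠ y := by
      intro h
      have h0 : (inner ℝ v (x - c) : ℝ) = 0 := by rw [real_inner_comm]; exact hv2
      have hval : (inner ℝ v (y - x) : ℝ) = β := by
        have e : y - x = β • v - (1/2 : ℝ) • (x - c) := by rw [hy]; module
        rw [e, inner_sub_right, real_inner_smul_right, real_inner_smul_right,
          real_inner_self_eq_norm_sq, hv1, h0]
        ring
      rw [← h, sub_self, inner_zero_right] at hval
      exact (ne_of_gt hβpos) hval.symm
    have hxz : x ≠ z := by
      intro h
      have h0 : (inner ℝ v (x - c) : ℝ) = 0 := by rw [real_inner_comm]; exact hv2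
      have hval : (inner ℝ v (z - x) : ℝ) = -β := by
        have e : z - x = -(β • v) - (1/2 : ℝ) • (x - c) := by rw [hz]; module
        rw [e, inner_sub_right, inner_neg_right, real_inner_smul_right, real_inner_smul_right,
          real_inner_self_eq_norm_sq, hv1, h0]
        ring
      rw [← h, sub_self, inner_zero_right] at hval
      have hb0 : β = 0 := by linarith [hval.symm]
      exact (ne_of_gt hβpos) hb0
    rcases hext y hyK z hzK (memhull c x y z hyc hzc hxc hsum) with h | h
    · exact hxy h
    · exact hxz h
end
end

section
/- Let n ≥ 2 and fix y₀ ∈ ℝⁿ. The function assigning to each x the volume of the 1-lens conv_c({x, y₀}), i.e. x ↦ Vol(conv_c({x, y₀})), is a convex function of x on the closed ball B(y₀, 2). -/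
open Metric Set MeasureTheory

noncomputable section

namespace Aux18

set_option maxHeartbeats 1000000


lemma red (s c u v w z : ℝ) (hs : 0 ≤ s) (hc : 0 ≤ c) (hv : 0 ≤ v) (hz : 0 ≤ z)
    (hu : 0 ≤ u) (hw : 0 ≤ w)
    (hsc : s^2 + c^2 = 1) (h1 : u^2 + v^2 ≤ 1) (h2 : w^2 + z^2 ≤ 1)
    (h3 : c ≤ u*c + v*s) (h4 : s ≤ w*s + z*c) :
    (u + w - 1)^2 + (v - z)^2 ≤ 1 := by
  have hu1 : u ≤ 1 := by nlinarith
  have hw1 : w ≤ 1 := by nlinarith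
  rcases eq_or_lt_of_le hs with hs0 | hs0
  · have hc1 : c = 1 := by nlinarith
    have hu' : u = 1 := by nlinarith
    have hv' : v = 0 := by nlinarith
    rw [hu', hv']; nlinarith
  rcases eq_or_lt_of_le hc with hc0 | hc0
  · have hs1 : s = 1 := by nlinarith
    have hw' : w = 1 := by nlinarith
    have hz' : z = 0 := by nlinarith
    rw [hw', hz']; nlinarith
  · have k1 : c*(1-u) ≤ v*s := by nlinarith
    have k2 : s*(1-w) ≤ z*c := by nlinarith
    have k3 : (c*(1-u))*(s*(1-w)) ≤ (v*s)*(z*c) :=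
      mul_le_mul k1 k2 (mul_nonneg hs (by linarith)) (mul_nonneg hv hs)
    have k4 : (1-u)*(1-w) ≤ v*z := by
      have hcs : 0 < s*c := by positivity
      nlinarith
    nlinarith

lemma core (s c t a p q : ℝ) (hs : 0 ≤ s) (hc : 0 ≤ c) (ht : 0 ≤ t) (ha : 0 ≤ a)
    (hp : 0 ≤ p) (hq : 0 ≤ q) (hsc : s^2 + c^2 = 1)
    (h1 : t^2 + (p+c)^2 ≤ 1) (h2 : (a+s)^2 + q^2 ≤ 1) :
    (t+a)^2 + (p+q)^2 ≤ 1 := by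
  have hts : t ≤ s := by nlinarith
  have hqc : q ≤ c := by nlinarith
  have key := red s c (t*s+(p+c)*c) (s*(p+c)-c*t) ((a+s)*s+q*c) ((a+s)*c-q*s)
    hs hc (by nlinarith) (by nlinarith) (by positivity) (by positivity)
    hsc (by nlinarith) (by nlinarith) (by nlinarith) (by nlinarith)
  have hid : (t+a)^2 + (p+q)^2 =
      (t*s+(p+c)*c + ((a+s)*s+q*c) - 1)^2 + (s*(p+c)-c*t - ((a+s)*c-q*s))^2 := by
    linear_combination (-((t+a+s)^2+(p+q+c)^2-1)) * hsc
  rw [hid]; exact key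

lemma full (s c t a p q : ℝ) (hs : 0 ≤ s) (hc : 0 ≤ c)
    (hp : 0 ≤ p) (hq : 0 ≤ q) (hsc : s^2 + c^2 = 1)
    (h1 : t^2 + (p+c)^2 ≤ 1) (h2 : (s-a)^2 + q^2 ≤ 1) (h3 : (s+a)^2 + q^2 ≤ 1) :
    (a-t)^2 + (p+q)^2 ≤ 1 := by
  have key := core s c |t| |a| p q hs hc (abs_nonneg t) (abs_nonneg a) hp hq hsc
    (by rw [sq_abs]; linarith) ?_
  · have h5 : |a - t| ≤ |a| + |t| := abs_sub a t
    have h6 : (a-t)^2 ≤ (|a| + |t|)^2 := by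
      rw [← sq_abs (a-t)]
      exact pow_le_pow_left₀ (abs_nonneg _) h5 2
    nlinarith [key]
  · rcases abs_cases a with ⟨h,_⟩|⟨h,_⟩ <;> rw [h]
    · linarith [h3]
    · nlinarith [h2]



abbrev E (N : ℕ) := EuclideanSpace ℝ (Fin N)

def e₀ (m : ℕ) : E (m+2) := EuclideanSpace.single 0 1

/-- the standard lens (spindle of `±s•e₀` with `c = √(1-s²)`) -/
def lens (m : ℕ) (c : ℝ) : Set (E (m+2)) :=
  {w | (w 0)^2 + (‖w - w 0 • e₀ m‖ + c)^2 ≤ 1}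

lemma inner_e₀ (m : ℕ) (v : E (m+2)) : (inner ℝ (e₀ m) v : ℝ) = v 0 := by
  simp [e₀, EuclideanSpace.inner_single_left]

lemma pyth (m : ℕ) (r : ℝ) (v : E (m+2)) (hv : v 0 = 0) :
    ‖r • e₀ m + v‖^2 = r^2 + ‖v‖^2 := by
  rw [norm_add_sq_real, real_inner_smul_left, inner_e₀, hv, norm_smul]
  simp [e₀, EuclideanSpace.norm_single, abs_sq]

lemma sub_proj_zero (m : ℕ) (w : E (m+2)) : (w - w 0 • e₀ m) 0 = 0 := by
  simp [e₀, EuclideanSpace.single_apply]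

lemma decomp (m : ℕ) (w : E (m+2)) : w = w 0 • e₀ m + (w - w 0 • e₀ m) := by abel


section transport
variable {n : ℕ}

lemma cDual_image (φ : E n → E n) (hsurj : Function.Surjective φ)
    (hd : ∀ w z, ‖φ w - φ z‖ = ‖w - z‖) (A : Set (E n)) :
    cDual (φ '' A) = φ '' cDual A := by
  ext y
  constructor
  · intro hy
    obtain ⟨y', rfl⟩ := hsurj y
    exact ⟨y', fun x hx => by rw [← hd]; exact hy _ ⟨x, hx, rfl⟩, rfl⟩
  · rintro ⟨y', hy', rfl⟩ b ⟨x, hx, rfl⟩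
    rw [hd]; exact hy' x hx

lemma cHull_image (φ : E n → E n) (hsurj : Function.Surjective φ)
    (hd : ∀ w z, ‖φ w - φ z‖ = ‖w - z‖) (A : Set (E n)) :
    cHull (φ '' A) = φ '' cHull A := by
  unfold cHull
  rw [cDual_image φ hsurj hd, cDual_image φ hsurj hd]

end transport

/-- membership of arc centers in the dual of the two endpoints -/
lemma hull_eq (m : ℕ) (s c : ℝ) (hs : 0 ≤ s) (hc : 0 ≤ c) (hsc : s^2 + c^2 = 1) :
    cHull {s • e₀ m, -(s • e₀ m)} = lens m c := by
  ext w
  set t := w 0 with ht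
  set u := w - w 0 • e₀ m with hu
  have hu0 : u 0 = 0 := sub_proj_zero m w
  have hw : w = t • e₀ m + u := decomp m w
  constructor
  · -- cHull ⊆ lens
    intro hwH
    show t^2 + (‖u‖ + c)^2 ≤ 1
    -- choose a unit vector e ⊥ e₀ aligned with u (or e₁ if u = 0)
    by_cases hu' : u = 0
    · -- use e = single 1 1
      have he0 : (EuclideanSpace.single (1 : Fin (m+2)) (1:ℝ)) 0 = 0 := by
        simp [EuclideanSpace.single_apply]
      have hz : (-(c • EuclideanSpace.single (1 : Fin (m+2)) (1:ℝ))) ∈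
          cDual {s • e₀ m, -(s • e₀ m)} := by
        intro x hx
        rcases hx with rfl | rfl
        · have : s • e₀ m - -(c • EuclideanSpace.single (1 : Fin (m+2)) (1:ℝ))
              = s • e₀ m + c • EuclideanSpace.single (1 : Fin (m+2)) (1:ℝ) := by abel
          rw [this]
          have := pyth m s (c • EuclideanSpace.single (1 : Fin (m+2)) (1:ℝ))
            (by simp [EuclideanSpace.single_apply])
          have hn : ‖c • EuclideanSpace.single (1 : Fin (m+2)) (1:ℝ)‖ = c := by
            rw [norm_smul]; simp [EuclideanSpace.norm_single, abs_of_nonneg hc]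
          nlinarith [norm_nonneg (s • e₀ m + c • EuclideanSpace.single (1 : Fin (m+2)) (1:ℝ))]
        · have : -(s • e₀ m) - -(c • EuclideanSpace.single (1 : Fin (m+2)) (1:ℝ))
              = (-s) • e₀ m + c • EuclideanSpace.single (1 : Fin (m+2)) (1:ℝ) := by
            rw [neg_smul]; abel
          rw [this]
          have := pyth m (-s) (c • EuclideanSpace.single (1 : Fin (m+2)) (1:ℝ))
            (by simp [EuclideanSpace.single_apply])
          have hn : ‖c • EuclideanSpace.single (1 : Fin (m+2)) (1:ℝ)‖ = c := by
            rw [norm_smul]; simp [EuclideanSpace.norm_single, abs_of_nonneg hc]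
          nlinarith [norm_nonneg ((-s) • e₀ m + c • EuclideanSpace.single (1 : Fin (m+2)) (1:ℝ))]
      have hle := hwH _ hz
      have : -(c • EuclideanSpace.single (1 : Fin (m+2)) (1:ℝ)) - w
          = (-t) • e₀ m + (-(c • EuclideanSpace.single (1 : Fin (m+2)) (1:ℝ)) - u) := by
        rw [hw]; module
      rw [this] at hle
      have hp := pyth m (-t) (-(c • EuclideanSpace.single (1 : Fin (m+2)) (1:ℝ)) - u)
        (by simp [EuclideanSpace.single_apply, hu0])
      have hn : ‖-(c • EuclideanSpace.single (1 : Fin (m+2)) (1:ℝ)) - u‖ = c := by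
        rw [hu']
        simp [norm_smul, EuclideanSpace.norm_single, abs_of_nonneg hc]
      rw [hu']
      simp only [norm_zero, zero_add]
      nlinarith [norm_nonneg ((-t) • e₀ m + (-(c • EuclideanSpace.single (1 : Fin (m+2)) (1:ℝ)) - u))]
    · -- use e = u / ‖u‖
      have hun : ‖u‖ ≠ 0 := norm_ne_zero_iff.mpr hu'
      have hunpos : 0 < ‖u‖ := norm_pos_iff.mpr hu'
      set e : E (m+2) := ‖u‖⁻¹ • u with he
      have he0 : e 0 = 0 := by simp [he, hu0]
      have hne : ‖e‖ = 1 := by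
        rw [he, norm_smul]; simp [abs_of_nonneg (inv_nonneg.mpr (norm_nonneg u))]
        field_simp
      have hz : (-(c • e)) ∈ cDual {s • e₀ m, -(s • e₀ m)} := by
        intro x hx
        have hce0 : (c • e) 0 = 0 := by simp [he0]
        have hcen : ‖c • e‖ = c := by rw [norm_smul, hne]; simp [abs_of_nonneg hc]
        rcases hx with rfl | rfl
        · have : s • e₀ m - -(c • e) = s • e₀ m + c • e := by abel
          rw [this]
          have := pyth m s (c • e) hce0
          nlinarith [norm_nonneg (s • e₀ m + c • e)]
        · have : -(s • e₀ m) - -(c • e) = (-s) • e₀ m + c • e := by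
            rw [neg_smul]; abel
          rw [this]
          have := pyth m (-s) (c • e) hce0
          nlinarith [norm_nonneg ((-s) • e₀ m + c • e)]
      have hle := hwH _ hz
      have hrw : -(c • e) - w = (-t) • e₀ m + (-(c • e) - u) := by rw [hw]; module
      rw [hrw] at hle
      have hp := pyth m (-t) (-(c • e) - u) (by simp [he0, hu0])
      have hn : ‖-(c • e) - u‖ = ‖u‖ + c := by
        have : -(c • e) - u = -((1 + c * ‖u‖⁻¹) • u) := by
          rw [he]; module
        rw [this, norm_neg, norm_smul]
        have h1 : (0:ℝ) ≤ 1 + c * ‖u‖⁻¹ := by positivity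
        rw [Real.norm_of_nonneg h1]
        field_simp
      nlinarith [norm_nonneg ((-t) • e₀ m + (-(c • e) - u)), norm_nonneg u]
  · -- lens ⊆ cHull
    intro hwS z hz
    have h1 := hz _ (Or.inl rfl)
    have h2 := hz _ (Or.inr rfl)
    set a := z 0 with ha
    set v := z - z 0 • e₀ m with hv
    have hv0 : v 0 = 0 := sub_proj_zero m z
    have hzd : z = a • e₀ m + v := decomp m z
    -- rewrite h1, h2
    have e1 : s • e₀ m - z = (s - a) • e₀ m + (-v) := by rw [hzd]; module
    have e2 : -(s • e₀ m) - z = (-s - a) • e₀ m + (-v) := by rw [hzd]; module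
    rw [e1] at h1; rw [e2] at h2
    have hp1 := pyth m (s - a) (-v) (by simp [hv0])
    have hp2 := pyth m (-s - a) (-v) (by simp [hv0])
    have hq1 : (s - a)^2 + ‖v‖^2 ≤ 1 := by
      rw [norm_neg] at hp1; nlinarith [norm_nonneg ((s - a) • e₀ m + (-v))]
    have hq2 : (s + a)^2 + ‖v‖^2 ≤ 1 := by
      rw [norm_neg] at hp2; nlinarith [norm_nonneg ((-s - a) • e₀ m + (-v))]
    have hwl : t^2 + (‖u‖ + c)^2 ≤ 1 := hwS
    -- target
    have e3 : z - w = (a - t) • e₀ m + (v - u) := by rw [hzd, hw]; module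
    have hp3 := pyth m (a - t) (v - u) (by simp [hv0, hu0])
    have hvu : ‖v - u‖ ≤ ‖v‖ + ‖u‖ := norm_sub_le v u
    have key := full s c t a ‖u‖ ‖v‖ hs hc (norm_nonneg u) (norm_nonneg v) hsc hwl hq1 hq2
    have h4 : ‖z - w‖^2 = (a - t)^2 + ‖v - u‖^2 := by rw [e3]; exact hp3
    have h5 : ‖z - w‖^2 ≤ 1 := by
      rw [h4]
      nlinarith [norm_nonneg (v - u), norm_nonneg v, norm_nonneg u, sq_nonneg (a - t)]
    nlinarith [norm_nonneg (z - w), h5]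


/-- the unit-ball volume constant of dimension m+1 -/
def κ (m : ℕ) : ENNReal := volume (closedBall (0 : E (m+1)) 1)

/-- slice radius profile -/
def g (m : ℕ) (c t : ℝ) : ℝ := (max (Real.sqrt (1 - t^2) - c) 0)^(m+1)

lemma g_nonneg (m : ℕ) (c t : ℝ) : 0 ≤ g m c t := pow_nonneg (le_max_right _ _) _

lemma g_cont (m : ℕ) (c : ℝ) : Continuous (g m c) := by
  unfold g; fun_prop

lemma slice_vol (m : ℕ) (c t : ℝ) (hc : 0 ≤ c) :
    volume {u : Fin (m+1) → ℝ | t^2 + (Real.sqrt (∑ j, (u j)^2) + c)^2 ≤ 1}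
      = ENNReal.ofReal (g m c t) * κ m := by
  have hF := EuclideanSpace.volume_preserving_symm_measurableEquiv_toLp (Fin (m+1))
  have hpre : (MeasurableEquiv.toLp 2 (Fin (m+1) → ℝ)).symm ⁻¹'
      {u : Fin (m+1) → ℝ | t^2 + (Real.sqrt (∑ j, (u j)^2) + c)^2 ≤ 1}
      = {v : E (m+1) | t^2 + (‖v‖ + c)^2 ≤ 1} := by
    ext v
    have : Real.sqrt (∑ j, ((MeasurableEquiv.toLp 2 (Fin (m+1) → ℝ)).symm v j)^2) = ‖v‖ := by
      rw [EuclideanSpace.norm_eq]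
      congr 1
      refine Finset.sum_congr rfl fun j _ => ?_
      rw [Real.norm_eq_abs, sq_abs]
      rfl
    simp only [mem_preimage, mem_setOf_eq, this]
  rw [← hF.measure_preimage, hpre]
  · by_cases h1t : 1 - t^2 < 0
    · have hs0 : Real.sqrt (1 - t^2) = 0 := Real.sqrt_eq_zero_of_nonpos h1t.le
      have hempty : {v : E (m+1) | t^2 + (‖v‖ + c)^2 ≤ 1} = ∅ := by
        ext v; simp only [mem_setOf_eq, mem_empty_iff_false, iff_false, not_le]
        nlinarith [norm_nonneg v]
      have hg0 : g m c t = 0 := by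
        unfold g; rw [hs0]
        rw [max_eq_right (by linarith)]
        simp
      rw [hempty, hg0]; simp
    · push_neg at h1t
      have hsq : Real.sqrt (1 - t^2) ^ 2 = 1 - t^2 := Real.sq_sqrt h1t
      have hset : {v : E (m+1) | t^2 + (‖v‖ + c)^2 ≤ 1}
          = {v : E (m+1) | ‖v‖ ≤ Real.sqrt (1 - t^2) - c} := by
        ext v
        simp only [mem_setOf_eq]
        constructor
        · intro h
          have h2 : (‖v‖ + c)^2 ≤ 1 - t^2 := by linarith
          have h3 : ‖v‖ + c ≤ Real.sqrt (1 - t^2) := by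
            have := Real.sqrt_le_sqrt h2
            rwa [Real.sqrt_sq (by positivity)] at this
          linarith
        · intro h
          have h3 : ‖v‖ + c ≤ Real.sqrt (1 - t^2) := by linarith
          have h4 : (‖v‖ + c)^2 ≤ Real.sqrt (1 - t^2) ^ 2 :=
            pow_le_pow_left₀ (by positivity) h3 2
          rw [hsq] at h4; linarith
      rw [hset]
      by_cases hρ : Real.sqrt (1 - t^2) - c < 0
      · have hempty : {v : E (m+1) | ‖v‖ ≤ Real.sqrt (1 - t^2) - c} = ∅ := by
          ext v; simp only [mem_setOf_eq, mem_empty_iff_false, iff_false, not_le]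
          exact lt_of_lt_of_le hρ (norm_nonneg v)
        have hg0 : g m c t = 0 := by
          unfold g; rw [max_eq_right hρ.le]; simp
        rw [hempty, hg0]; simp
      · push_neg at hρ
        have hball : {v : E (m+1) | ‖v‖ ≤ Real.sqrt (1 - t^2) - c}
            = closedBall (0 : E (m+1)) (Real.sqrt (1 - t^2) - c) := by
          ext v; simp [mem_closedBall, dist_zero_right]
        rw [hball, Measure.addHaar_closedBall' _ _ hρ]
        congr 2
        unfold g
        rw [max_eq_left hρ, finrank_euclideanSpace_fin]
  · have hm : MeasurableSet {u : Fin (m+1) → ℝ | t^2 + (Real.sqrt (∑ j, (u j)^2) + c)^2 ≤ 1} :=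
      (isClosed_le (by fun_prop) continuous_const).measurableSet
    exact hm.nullMeasurableSet

lemma volume_lens (m : ℕ) (c : ℝ) (hc : 0 ≤ c) :
    volume (lens m c) = ∫⁻ t : ℝ, ENNReal.ofReal (g m c t) * κ m := by
  have hF := EuclideanSpace.volume_preserving_symm_measurableEquiv_toLp (Fin (m+2))
  have hG := volume_preserving_piFinSuccAbove (fun _ : Fin (m+2) => ℝ) 0
  set S₁ : Set (ℝ × (Fin (m+1) → ℝ)) :=
    {p | p.1^2 + (Real.sqrt (∑ j, (p.2 j)^2) + c)^2 ≤ 1} with hS₁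
  have hS₁m : MeasurableSet S₁ :=
    (isClosed_le (by fun_prop) continuous_const).measurableSet
  have hlens : lens m c = (MeasurableEquiv.toLp 2 (Fin (m+2) → ℝ)).symm ⁻¹'
      ((MeasurableEquiv.piFinSuccAbove (fun _ : Fin (m+2) => ℝ) 0) ⁻¹' S₁) := by
    ext w
    have htail : ‖w - w 0 • e₀ m‖ = Real.sqrt (∑ j : Fin (m+1), (w j.succ)^2) := by
      rw [EuclideanSpace.norm_eq]
      congr 1
      rw [Fin.sum_univ_succ]
      have h0 : ‖(w - w 0 • e₀ m) 0‖^2 = 0 := by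
        simp [e₀, EuclideanSpace.single_apply]
      rw [h0, zero_add]
      refine Finset.sum_congr rfl fun j _ => ?_
      have : (w - w 0 • e₀ m) j.succ = w j.succ := by
        simp [e₀, EuclideanSpace.single_apply, (Fin.succ_ne_zero j)]
      rw [this, Real.norm_eq_abs, sq_abs]
    simp only [mem_preimage, MeasurableEquiv.piFinSuccAbove_apply, mem_setOf_eq, lens, htail]
    constructor
    · intro h
      convert h using 3 <;> simp [Fin.zero_succAbove, hS₁, Fin.tail]
    · intro h
      convert h using 3 <;> simp [Fin.zero_succAbove, hS₁, Fin.tail]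
  rw [hlens, hF.measure_preimage (((MeasurableEquiv.piFinSuccAbove (fun _ : Fin (m+2) => ℝ) 0).measurable hS₁m).nullMeasurableSet),
    hG.measure_preimage hS₁m.nullMeasurableSet, Measure.volume_eq_prod, Measure.prod_apply hS₁m]
  refine lintegral_congr fun t => ?_
  have : (Prod.mk t ⁻¹' S₁) = {u : Fin (m+1) → ℝ | t^2 + (Real.sqrt (∑ j, (u j)^2) + c)^2 ≤ 1} := rfl
  rw [this, slice_vol m c t hc]


def V (m : ℕ) (c : ℝ) : ℝ := (volume (lens m c)).toReal

lemma lens_subset_ball (m : ℕ) (c : ℝ) (hc : 0 ≤ c) :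
    lens m c ⊆ closedBall (0 : E (m+2)) 1 := by
  intro w hw
  have hw' : (w 0)^2 + (‖w - w 0 • e₀ m‖ + c)^2 ≤ 1 := hw
  have hsq : ‖w‖^2 = (w 0)^2 + ‖w - w 0 • e₀ m‖^2 := by
    conv_lhs => rw [decomp m w]
    exact pyth m (w 0) _ (sub_proj_zero m w)
  have h1 : ‖w‖^2 ≤ 1 := by nlinarith [norm_nonneg (w - w 0 • e₀ m)]
  simp only [mem_closedBall, dist_zero_right]
  nlinarith [norm_nonneg w]

lemma lens_vol_ne_top (m : ℕ) (c : ℝ) (hc : 0 ≤ c) : volume (lens m c) ≠ ⊤ :=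
  ((measure_mono (lens_subset_ball m c hc)).trans_lt measure_closedBall_lt_top).ne

lemma lens_anti (m : ℕ) {c c' : ℝ} (hc : 0 ≤ c) (hcc : c ≤ c') :
    lens m c' ⊆ lens m c := by
  intro w hw
  have hw' : (w 0)^2 + (‖w - w 0 • e₀ m‖ + c')^2 ≤ 1 := hw
  show (w 0)^2 + (‖w - w 0 • e₀ m‖ + c)^2 ≤ 1
  nlinarith [norm_nonneg (w - w 0 • e₀ m)]

lemma V_anti (m : ℕ) {c c' : ℝ} (hc : 0 ≤ c) (hcc : c ≤ c') : V m c' ≤ V m c :=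
  ENNReal.toReal_mono (lens_vol_ne_top m c hc) (measure_mono (lens_anti m hc hcc))

lemma V_nonneg (m : ℕ) (c : ℝ) : 0 ≤ V m c := ENNReal.toReal_nonneg

lemma g_convex (m : ℕ) (c₁ c₂ a b t : ℝ) (ha : 0 ≤ a) (hb : 0 ≤ b) (hab : a + b = 1) :
    g m (a*c₁ + b*c₂) t ≤ a * g m c₁ t + b * g m c₂ t := by
  unfold g
  set X := Real.sqrt (1 - t^2)
  set M₁ := max (X - c₁) 0 with hM₁
  set M₂ := max (X - c₂) 0 with hM₂
  have h₁ : 0 ≤ M₁ := le_max_right _ _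
  have h₂ : 0 ≤ M₂ := le_max_right _ _
  have step1 : max (X - (a*c₁ + b*c₂)) 0 ≤ a * M₁ + b * M₂ := by
    apply max_le _ (by positivity)
    have e1 : X - (a*c₁ + b*c₂) = a * (X - c₁) + b * (X - c₂) := by
      have : a * X + b * X = X := by rw [← add_mul, hab, one_mul]
      ring_nf; nlinarith [this]
    rw [e1]
    gcongr <;> [exact le_max_left _ _; exact le_max_left _ _]
  calc (max (X - (a*c₁ + b*c₂)) 0)^(m+1)
      ≤ (a * M₁ + b * M₂)^(m+1) := pow_le_pow_left₀ (le_max_right _ _) step1 _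
    _ ≤ a * M₁^(m+1) + b * M₂^(m+1) := by
        have := (convexOn_pow (m+1)).2 (mem_Ici.mpr h₁) (mem_Ici.mpr h₂) ha hb hab
        simpa [smul_eq_mul] using this

lemma g_meas (m : ℕ) (c : ℝ) : Measurable fun t => ENNReal.ofReal (g m c t) := by
  apply Measurable.ennreal_ofReal
  unfold g; fun_prop

lemma V_convex (m : ℕ) (c₁ c₂ a b : ℝ) (h1 : 0 ≤ c₁) (h2 : 0 ≤ c₂)
    (ha : 0 ≤ a) (hb : 0 ≤ b) (hab : a + b = 1) :
    V m (a*c₁ + b*c₂) ≤ a * V m c₁ + b * V m c₂ := by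
  have hmid : 0 ≤ a*c₁ + b*c₂ := by positivity
  have key : volume (lens m (a*c₁+b*c₂)) ≤
      ENNReal.ofReal a * volume (lens m c₁) + ENNReal.ofReal b * volume (lens m c₂) := by
    rw [volume_lens _ _ hmid, volume_lens _ _ h1, volume_lens _ _ h2]
    calc ∫⁻ t, ENNReal.ofReal (g m (a*c₁+b*c₂) t) * κ m
        ≤ ∫⁻ t, (ENNReal.ofReal a * ENNReal.ofReal (g m c₁ t)
            + ENNReal.ofReal b * ENNReal.ofReal (g m c₂ t)) * κ m := by
          apply lintegral_mono fun t => ?_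
          apply mul_le_mul_left
          rw [← ENNReal.ofReal_mul ha, ← ENNReal.ofReal_mul hb,
            ← ENNReal.ofReal_add (mul_nonneg ha (g_nonneg m c₁ t)) (mul_nonneg hb (g_nonneg m c₂ t))]
          exact ENNReal.ofReal_le_ofReal (g_convex m c₁ c₂ a b t ha hb hab)
      _ = ∫⁻ t, (ENNReal.ofReal a * (ENNReal.ofReal (g m c₁ t) * κ m)
            + ENNReal.ofReal b * (ENNReal.ofReal (g m c₂ t) * κ m)) := by
          congr 1; ext t; ring
      _ = (ENNReal.ofReal a * ∫⁻ t, ENNReal.ofReal (g m c₁ t) * κ m)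
            + ENNReal.ofReal b * ∫⁻ t, ENNReal.ofReal (g m c₂ t) * κ m := by
          rw [lintegral_add_left (((g_meas m c₁).mul_const _).const_mul _)]
          rw [lintegral_const_mul' _ _ ENNReal.ofReal_ne_top,
            lintegral_const_mul' _ _ ENNReal.ofReal_ne_top]
  have hne1 := lens_vol_ne_top m c₁ h1
  have hne2 := lens_vol_ne_top m c₂ h2
  have hrhs : ENNReal.ofReal a * volume (lens m c₁) + ENNReal.ofReal b * volume (lens m c₂) ≠ ⊤ := by
    apply ENNReal.add_ne_top.mpr
    exact ⟨ENNReal.mul_ne_top ENNReal.ofReal_ne_top hne1,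
      ENNReal.mul_ne_top ENNReal.ofReal_ne_top hne2⟩
  have := ENNReal.toReal_mono hrhs key
  rwa [ENNReal.toReal_add (ENNReal.mul_ne_top ENNReal.ofReal_ne_top hne1)
      (ENNReal.mul_ne_top ENNReal.ofReal_ne_top hne2),
    ENNReal.toReal_mul, ENNReal.toReal_mul, ENNReal.toReal_ofReal ha,
    ENNReal.toReal_ofReal hb] at this


/-- the profile function -/
def ccf (r : ℝ) : ℝ := Real.sqrt (1 - (r/2)^2)

lemma ccf_nonneg (r : ℝ) : 0 ≤ ccf r := Real.sqrt_nonneg _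

lemma cont_apply0 (m : ℕ) : Continuous (fun w : E (m+2) => w 0) := by
  have h : Continuous fun w : E (m+2) => (inner ℝ (e₀ m) w : ℝ) :=
    continuous_const.inner continuous_id
  have he : (fun w : E (m+2) => w 0) = fun w => (inner ℝ (e₀ m) w : ℝ) := by
    funext w; rw [inner_e₀]
  rw [he]; exact h

lemma lens_closed (m : ℕ) (c : ℝ) : IsClosed (lens m c) := by
  apply isClosed_le _ continuous_const
  apply Continuous.add
  · exact (cont_apply0 m).pow 2
  · apply Continuous.pow
    apply Continuous.add _ continuous_const
    exact (continuous_id.sub ((cont_apply0 m).smul continuous_const)).norm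

/-- transport: the volume of the lens of `{x, y₀}` -/
lemma vol_hull (m : ℕ) (y₀ x : E (m+2)) (hx : ‖x - y₀‖ ≤ 2) :
    volume (cHull {x, y₀}) = volume (lens m (ccf ‖x - y₀‖)) := by
  set d : ℝ := ‖x - y₀‖ with hd
  have hd0 : 0 ≤ d := norm_nonneg _
  set s : ℝ := d/2 with hs'
  set c : ℝ := ccf d with hc'
  have hs : 0 ≤ s := by positivity
  have hc : 0 ≤ c := Real.sqrt_nonneg _
  have harg : 0 ≤ 1 - (d/2)^2 := by nlinarith
  have hsc : s^2 + c^2 = 1 := by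
    have := Real.sq_sqrt harg
    simp only [hc', ccf, hs']
    rw [this]; ring
  -- obtain the isometry T
  obtain ⟨T, hT⟩ : ∃ T : E (m+2) ≃ₗᵢ[ℝ] E (m+2), T (d • e₀ m) = x - y₀ := by
    by_cases hxy : x = y₀
    · refine ⟨LinearIsometryEquiv.refl ℝ _, ?_⟩
      have : d = 0 := by rw [hd, hxy]; simp
      rw [this, hxy]; simp
    · have hdne : d ≠ 0 := by
        simp only [hd, ne_eq, norm_eq_zero, sub_eq_zero]; exact hxy
      set eh : E (m+2) := d⁻¹ • (x - y₀) with heh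
      have hehn : ‖eh‖ = 1 := by
        rw [heh, norm_smul, norm_inv, Real.norm_of_nonneg hd0, ← hd]
        field_simp
      have he₀n : ‖e₀ m‖ = 1 := by simp [e₀, EuclideanSpace.norm_single]
      refine ⟨Submodule.reflection (ℝ ∙ (e₀ m - eh))ᗮ, ?_⟩
      have href : Submodule.reflection (ℝ ∙ (e₀ m - eh))ᗮ (e₀ m) = eh :=
        Submodule.reflection_sub (by rw [he₀n, hehn])
      rw [_root_.map_smul, href, heh, smul_smul]
      rw [mul_inv_cancel₀ hdne, one_smul]
  set v : E (m+2) := y₀ + T (s • e₀ m) with hv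
  set φ : E (m+2) → E (m+2) := fun w => v + T w with hφ
  have hsurj : Function.Surjective φ := fun z => ⟨T.symm (z - v), by simp [hφ]⟩
  have hdist : ∀ w z, ‖φ w - φ z‖ = ‖w - z‖ := by
    intro w z
    simp only [hφ, add_sub_add_left_eq_sub, ← map_sub, T.norm_map]
  have him : φ '' {s • e₀ m, -(s • e₀ m)} = {x, y₀} := by
    rw [Set.image_pair]
    have h2s : T (s • e₀ m) + T (s • e₀ m) = x - y₀ := by
      rw [← map_add, ← add_smul, ← hT]
      congr 2
      rw [hs']; ring
    have h1 : φ (s • e₀ m) = x := by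
      simp only [hφ, hv]
      rw [add_assoc, h2s]; abel
    have h2 : φ (-(s • e₀ m)) = y₀ := by
      simp only [hφ, hv, map_neg]
      abel
    rw [h1, h2]
  calc volume (cHull {x, y₀}) = volume (φ '' cHull {s • e₀ m, -(s • e₀ m)}) := by
        rw [← him, cHull_image φ hsurj hdist]
    _ = volume (φ '' lens m c) := by rw [hull_eq m s c hs hc hsc]
    _ = volume (lens m c) := by
        have himg : φ '' lens m c = (fun z => -v + z) ⁻¹' (T.symm ⁻¹' lens m c) := by
          ext z
          simp only [hφ, mem_image, mem_preimage]
          constructor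
          · rintro ⟨w, hw, rfl⟩; simpa using hw
          · intro hz; exact ⟨T.symm (-v + z), hz, by simp⟩
        rw [himg]
        rw [measure_preimage_add]
        exact T.symm.measurePreserving.measure_preimage
          (lens_closed m c).measurableSet.nullMeasurableSet


lemma ccf_anti {r r' : ℝ} (hr : 0 ≤ r) (hrr : r ≤ r') : ccf r' ≤ ccf r := by
  apply Real.sqrt_le_sqrt
  have : r^2 ≤ r'^2 := pow_le_pow_left₀ hr hrr 2
  nlinarith

lemma ccf_concave2 (A B a b : ℝ) (hA : 0 ≤ A) (hA2 : A ≤ 2) (hB : 0 ≤ B) (hB2 : B ≤ 2)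
    (ha : 0 ≤ a) (hb : 0 ≤ b) (hab : a + b = 1) :
    a * ccf A + b * ccf B ≤ ccf (a*A + b*B) := by
  have hP0 : 0 ≤ ccf A := ccf_nonneg A
  have hQ0 : 0 ≤ ccf B := ccf_nonneg B
  set P := ccf A with hP
  set Q := ccf B with hQ
  have hP2 : P^2 = 1 - (A/2)^2 := Real.sq_sqrt (by nlinarith)
  have hQ2 : Q^2 = 1 - (B/2)^2 := Real.sq_sqrt (by nlinarith)
  have hPQ : P*Q ≤ 1 - A*B/4 := by nlinarith [sq_nonneg (P-Q), sq_nonneg (A-B)]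
  have h0 : 0 ≤ a*P + b*Q := by positivity
  rw [ccf, ← Real.sqrt_sq h0]
  apply Real.sqrt_le_sqrt
  have e1 : a^2*P^2 = a^2*(1-(A/2)^2) := by rw [hP2]
  have e2 : b^2*Q^2 = b^2*(1-(B/2)^2) := by rw [hQ2]
  have e3 : a*b*(P*Q) ≤ a*b*(1-A*B/4) := mul_le_mul_of_nonneg_left hPQ (mul_nonneg ha hb)
  have hab2 : a^2 + 2*(a*b) + b^2 = 1 := by linear_combination (a+b+1)*hab
  nlinarith [e1, e2, e3, hab2]


end Aux18

open Aux18 in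
/-- The volume of the `1`-lens `conv_c({x, y₀})` is a convex function of `x` on
`B(y₀, 2)`. -/
theorem stmt18 (n : ℕ) (hn : 2 ≤ n) (y₀ : EuclideanSpace ℝ (Fin n)) :
    ConvexOn ℝ (closedBall y₀ 2)
      (fun x : EuclideanSpace ℝ (Fin n) => (volume (cHull {x, y₀})).toReal) := by
  obtain ⟨m, rfl⟩ : ∃ m, n = m + 2 := ⟨n - 2, by omega⟩
  constructor
  · exact convex_closedBall y₀ 2
  intro x hx y hy a b ha hb hab
  have hxn : ‖x - y₀‖ ≤ 2 := by rw [← dist_eq_norm]; exact mem_closedBall.mp hx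
  have hyn : ‖y - y₀‖ ≤ 2 := by rw [← dist_eq_norm]; exact mem_closedBall.mp hy
  have hsplit : a • x + b • y - y₀ = a • (x - y₀) + b • (y - y₀) + ((a+b) • y₀ - y₀) := by
    module
  have hC : ‖a • x + b • y - y₀‖ ≤ a * ‖x - y₀‖ + b * ‖y - y₀‖ := by
    rw [hsplit, hab, one_smul, sub_self, add_zero]
    refine (norm_add_le _ _).trans ?_
    rw [norm_smul, norm_smul, Real.norm_of_nonneg ha, Real.norm_of_nonneg hb]
  have hCle : ‖a • x + b • y - y₀‖ ≤ 2 := le_trans hC (by nlinarith)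
  show (volume (cHull {a • x + b • y, y₀})).toReal ≤
    a * (volume (cHull {x, y₀})).toReal + b * (volume (cHull {y, y₀})).toReal
  rw [vol_hull m y₀ _ hCle, vol_hull m y₀ x hxn, vol_hull m y₀ y hyn]
  show V m (ccf ‖a • x + b • y - y₀‖) ≤ a * V m (ccf ‖x - y₀‖) + b * V m (ccf ‖y - y₀‖)
  have h1 : a * ccf ‖x - y₀‖ + b * ccf ‖y - y₀‖ ≤ ccf ‖a • x + b • y - y₀‖ := by
    refine le_trans (ccf_concave2 _ _ a b (norm_nonneg _) hxn (norm_nonneg _) hyn ha hb hab) ?_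
    exact ccf_anti (norm_nonneg _) hC
  have h2 : V m (ccf ‖a • x + b • y - y₀‖) ≤ V m (a * ccf ‖x - y₀‖ + b * ccf ‖y - y₀‖) :=
    V_anti m (add_nonneg (mul_nonneg ha (ccf_nonneg _)) (mul_nonneg hb (ccf_nonneg _))) h1
  have h3 := V_convex m (ccf ‖x - y₀‖) (ccf ‖y - y₀‖) a b (ccf_nonneg _) (ccf_nonneg _) ha hb hab
  linarith
end
end
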